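/- Let q ∈ ℂ[z,w] have degree at most (n,m) and no zeros on 𝔻², and let μ be the Bernstein–Szegő measure dμ = |q(z,w)|^{-2} dσ on 𝕋², where dσ is normalized Lebesgue measure. Then q ∈ L²(μ) and for every polynomial f ∈ ℂ[z,w] ∩ L²(μ) with f(0,0) = 0 whose Fourier support lies in {(j,k): k ≥ 1} ∪ {(j,0): j ≥ 1}, one has ∫_{𝕋²} f/q dσ = 0, i.e. f ⟂ q in L²(μ). -/

import Mathlib

open MeasureTheory Real MvPolynomial

namespace BSaux

namespace Complex

noncomputable def abs : AbsoluteValue ℂ ℝ where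
  toFun z := ‖z‖
  map_mul' := norm_mul
  nonneg' := norm_nonneg
  eq_zero' _ := norm_eq_zero
  add_le' := norm_add_le

lemma abs_apply (z : ℂ) : abs z = ‖z‖ := rfl

lemma norm_eq_abs (z : ℂ) : ‖z‖ = abs z := rfl

lemma abs_exp (z : ℂ) : abs (_root_.Complex.exp z) = Real.exp z.re :=
  _root_.Complex.norm_exp z

lemma abs_I : abs _root_.Complex.I = 1 := _root_.Complex.norm_I

lemma abs_ofReal (r : ℝ) : abs (r : ℂ) = |r| := by
  rw [abs_apply]; simp

lemma continuous_abs : Continuous abs := continuous_norm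

lemma dist_eq (z w : ℂ) : dist z w = abs (z - w) := _root_.Complex.dist_eq z w

lemma abs_mul_exp_arg_mul_I (x : ℂ) :
    ((abs x : ℝ) : ℂ) * _root_.Complex.exp ((x.arg : ℂ) * _root_.Complex.I) = x :=
  _root_.Complex.norm_mul_exp_arg_mul_I x

lemma abs_exp_sub_one_le {x : ℂ} (hx : abs x ≤ 1) :
    abs (_root_.Complex.exp x - 1) ≤ 2 * abs x :=
  _root_.Complex.norm_exp_sub_one_le hx

end Complex



noncomputable def E (θ : ℝ) : ℂ := Complex.exp (θ * Complex.I)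

lemma abs_E (θ : ℝ) : Complex.abs (E θ) = 1 := by
  simp [E, Complex.abs_exp]

lemma countable_E_eq (α : ℂ) : Set.Countable {θ : ℝ | E θ = α} := by
  rcases Set.eq_empty_or_nonempty {θ : ℝ | E θ = α} with h | ⟨θ₀, hθ₀⟩
  · simp [h]
  · have : {θ : ℝ | E θ = α} ⊆ Set.range (fun n : ℤ => θ₀ + n * (2 * π)) := by
      intro θ hθ
      have h1 : Complex.exp (θ * Complex.I) = Complex.exp (θ₀ * Complex.I) := by
        simpa [E] using hθ.trans hθ₀.symm
      rw [Complex.exp_eq_exp_iff_exists_int] at h1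
      obtain ⟨k, hk⟩ := h1
      refine ⟨k, ?_⟩
      have h2 : (θ : ℂ) * Complex.I = ((θ₀ : ℂ) + k * (2 * π)) * Complex.I := by
        rw [hk]; push_cast; ring
      have h3 : (θ : ℂ) = (θ₀ : ℂ) + k * (2 * π) :=
        mul_right_cancel₀ Complex.I_ne_zero h2
      exact_mod_cast h3.symm
    exact Set.Countable.mono this (Set.countable_range _)

lemma null_E_mem {S : Set ℂ} (hS : S.Finite) : volume {θ : ℝ | E θ ∈ S} = 0 := by
  have : {θ : ℝ | E θ ∈ S} = ⋃ α ∈ S, {θ : ℝ | E θ = α} := by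
    ext θ; simp
  rw [this]
  exact Set.Countable.measure_zero ((hS.countable).biUnion fun α _ => countable_E_eq α) _

lemma continuous_E : Continuous E :=
  Complex.continuous_exp.comp (Complex.continuous_ofReal.mul continuous_const)

lemma eval_circle_bound (c : Polynomial ℂ) :
    ∃ M : ℝ, 0 < M ∧ ∀ w : ℂ, Complex.abs w = 1 → Complex.abs (c.eval w) ≤ M := by
  refine ⟨(∑ i ∈ Finset.range (c.natDegree + 1), Complex.abs (c.coeff i)) + 1,
    by positivity, fun w hw => ?_⟩
  rw [Polynomial.eval_eq_sum_range]
  calc Complex.abs (∑ i ∈ Finset.range (c.natDegree + 1), c.coeff i * w ^ i)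
      ≤ ∑ i ∈ Finset.range (c.natDegree + 1), Complex.abs (c.coeff i * w ^ i) :=
        Complex.abs.sum_le _ _
    _ = ∑ i ∈ Finset.range (c.natDegree + 1), Complex.abs (c.coeff i) := by
        refine Finset.sum_congr rfl fun i _ => ?_
        simp [map_mul, map_pow, hw]
    _ ≤ _ := by linarith




noncomputable def toP (g : MvPolynomial (Fin 2) ℂ) : Polynomial (Polynomial ℂ) :=
  MvPolynomial.eval₂ (Polynomial.C.comp Polynomial.C)
    ![Polynomial.C Polynomial.X, Polynomial.X] g

lemma eval_toP (g : MvPolynomial (Fin 2) ℂ) (z w : ℂ) :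
    Polynomial.eval w (Polynomial.map (Polynomial.evalRingHom z) (toP g)) =
      MvPolynomial.eval ![z, w] g := by
  induction g using MvPolynomial.induction_on with
  | C c => simp [toP]
  | add p q hp hq =>
      simp only [toP, MvPolynomial.eval₂_add, Polynomial.map_add, Polynomial.eval_add,
        map_add] at *
      rw [hp, hq]
  | mul_X p i hp =>
      simp only [toP, MvPolynomial.eval₂_mul, MvPolynomial.eval₂_X, Polynomial.map_mul,
        Polynomial.eval_mul, map_mul, MvPolynomial.eval_X] at *
      rw [hp]
      congr 1
      fin_cases i <;> simp

lemma cont2 (g : MvPolynomial (Fin 2) ℂ) :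
    Continuous (fun zw : ℂ × ℂ => MvPolynomial.eval ![zw.1, zw.2] g) := by
  induction g using MvPolynomial.induction_on with
  | C c => simpa using continuous_const
  | add p q hp hq => simp only [map_add]; exact hp.add hq
  | mul_X p i hp =>
      simp only [map_mul, MvPolynomial.eval_X]
      fin_cases i
      · exact hp.mul continuous_fst
      · exact hp.mul continuous_snd


lemma exists_theta {α : ℂ} (hα : Complex.abs α = 1) :
    ∃ θ₀ : ℝ, 0 ≤ θ₀ ∧ θ₀ < 2 * π ∧ E θ₀ = α := by
  have hEarg : Complex.exp (α.arg * Complex.I) = α := by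
    have := Complex.abs_mul_exp_arg_mul_I α
    rwa [hα, Complex.ofReal_one, one_mul] at this
  have hπ : (0 : ℝ) < π := Real.pi_pos
  have harg1 : α.arg ≤ π := Complex.arg_le_pi α
  have harg2 : -π < α.arg := Complex.neg_pi_lt_arg α
  by_cases h : 0 ≤ α.arg
  · exact ⟨α.arg, h, by linarith, hEarg⟩
  · refine ⟨α.arg + 2 * π, by linarith, by linarith, ?_⟩
    show Complex.exp (((α.arg + 2 * π : ℝ) : ℂ) * Complex.I) = α
    push_cast
    rw [add_mul, Complex.exp_add, hEarg]
    simp [Complex.exp_two_pi_mul_I]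

lemma E_sub (θ θ₀ : ℝ) : E θ = E θ₀ * Complex.exp (((θ - θ₀ : ℝ) : ℂ) * Complex.I) := by
  rw [E, E, ← Complex.exp_add]
  congr 1
  push_cast
  ring

set_option maxHeartbeats 2000000 in
lemma OV_not_integrable {a b : Polynomial ℂ} {α : ℂ} (hα : Complex.abs α = 1)
    (ha : a.eval α ≠ 0) (hbroot : b.eval α = 0) (hb : b ≠ 0) :
    ¬ IntegrableOn (fun θ : ℝ => a.eval (E θ) / b.eval (E θ))
      (Set.Icc 0 (2 * π)) volume := by
  intro hint
  obtain ⟨θ₀, hθ₀0, hθ₀2, hEθ₀⟩ := exists_theta hα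
  obtain ⟨c, hc⟩ := (Polynomial.dvd_iff_isRoot.2 hbroot)
  obtain ⟨M, hM, hMb⟩ := eval_circle_bound c
  have hA0 : 0 < Complex.abs (a.eval α) := AbsoluteValue.pos _ ha
  set A : ℝ := Complex.abs (a.eval α) with hA
  -- continuity of |a(E θ)| at θ₀
  have hconta : ContinuousAt (fun θ : ℝ => Complex.abs (a.eval (E θ))) θ₀ :=
    (Complex.continuous_abs.comp ((a.continuous_aeval).comp continuous_E)).continuousAt
  have hval : A / 2 < (fun θ : ℝ => Complex.abs (a.eval (E θ))) θ₀ := by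
    simp only [hEθ₀]; linarith
  have hev : {θ : ℝ | A / 2 < Complex.abs (a.eval (E θ))} ∈ nhds θ₀ :=
    hconta (Ioi_mem_nhds hval)
  obtain ⟨ε₁, hε₁, hball⟩ := Metric.mem_nhds_iff.1 hev
  obtain ⟨ε, hε, hεa, hεb, hεc⟩ :
      ∃ ε : ℝ, 0 < ε ∧ ε ≤ ε₁ ∧ ε ≤ 1 ∧ ε ≤ 2 * π - θ₀ :=
    ⟨min (min ε₁ 1) (2 * π - θ₀),
      lt_min (lt_min hε₁ one_pos) (by linarith),
      le_trans (min_le_left _ _) (min_le_left _ _),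
      le_trans (min_le_left _ _) (min_le_right _ _), min_le_right _ _⟩
  have hK0 : 0 < (A / 2) / (2 * M) := by positivity
  set K : ℝ := (A / 2) / (2 * M) with hK
  have hsub : Set.Ioo θ₀ (θ₀ + ε) ⊆ Set.Icc 0 (2 * π) := by
    intro θ hθ
    exact ⟨by linarith [hθ.1], by linarith [hθ.2]⟩
  have hIoo : IntegrableOn (fun θ : ℝ => a.eval (E θ) / b.eval (E θ))
      (Set.Ioo θ₀ (θ₀ + ε)) volume := hint.mono_set hsub
  have hnull : volume {θ : ℝ | b.eval (E θ) = 0} = 0 :=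
    null_E_mem (Polynomial.finite_setOf_isRoot hb)
  have hbound : ∀ᵐ θ ∂(volume.restrict (Set.Ioo θ₀ (θ₀ + ε))),
      ‖K * (θ - θ₀)⁻¹‖ ≤ ‖a.eval (E θ) / b.eval (E θ)‖ := by
    have h1 : ∀ᵐ θ ∂(volume.restrict (Set.Ioo θ₀ (θ₀ + ε))), b.eval (E θ) ≠ 0 := by
      refine ae_restrict_of_ae ?_
      rw [MeasureTheory.ae_iff]
      simpa using hnull
    have h2 : ∀ᵐ θ ∂(volume.restrict (Set.Ioo θ₀ (θ₀ + ε))), θ ∈ Set.Ioo θ₀ (θ₀ + ε) :=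
      MeasureTheory.ae_restrict_mem measurableSet_Ioo
    filter_upwards [h1, h2] with θ hbne hθ
    have hθ1 : θ₀ < θ := hθ.1
    have hθ2 : θ < θ₀ + ε := hθ.2
    have habs : |θ - θ₀| ≤ 1 := by
      rw [abs_of_pos (by linarith)]; linarith
    have hEdiff : Complex.abs (E θ - α) ≤ 2 * (θ - θ₀) := by
      have h5 : E θ - α = E θ₀ * (Complex.exp (((θ - θ₀ : ℝ) : ℂ) * Complex.I) - 1) := by
        rw [← hEθ₀, E_sub θ θ₀]; ring
      rw [h5, map_mul, abs_E, one_mul]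
      calc Complex.abs (Complex.exp (((θ - θ₀ : ℝ) : ℂ) * Complex.I) - 1)
          ≤ 2 * Complex.abs (((θ - θ₀ : ℝ) : ℂ) * Complex.I) := by
            apply Complex.abs_exp_sub_one_le
            rw [map_mul, Complex.abs_I, mul_one, Complex.abs_ofReal]
            exact habs
        _ = 2 * (θ - θ₀) := by
            rw [map_mul, Complex.abs_I, mul_one, Complex.abs_ofReal,
              abs_of_pos (by linarith)]
    have hbup : Complex.abs (b.eval (E θ)) ≤ 2 * M * (θ - θ₀) := by
      rw [hc, Polynomial.eval_mul, map_mul]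
      have h3 : Complex.abs ((Polynomial.X - Polynomial.C α).eval (E θ)) ≤ 2 * (θ - θ₀) := by
        simpa using hEdiff
      have h4 : Complex.abs (c.eval (E θ)) ≤ M := hMb _ (abs_E θ)
      have h5 : Complex.abs ((Polynomial.X - Polynomial.C α).eval (E θ)) *
            Complex.abs (c.eval (E θ)) ≤ (2 * (θ - θ₀)) * M := by
        apply mul_le_mul h3 h4 (AbsoluteValue.nonneg _ _) (by linarith)
      linarith
    have hbpos : 0 < Complex.abs (b.eval (E θ)) := AbsoluteValue.pos _ hbne
    have halow : A / 2 ≤ Complex.abs (a.eval (E θ)) := by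
      have hmem : θ ∈ Metric.ball θ₀ ε₁ := by
        rw [Metric.mem_ball, Real.dist_eq, abs_of_pos (by linarith)]
        linarith
      exact le_of_lt (hball hmem)
    rw [norm_div, Complex.norm_eq_abs, Complex.norm_eq_abs, Real.norm_eq_abs,
      abs_of_pos (mul_pos hK0 (inv_pos.2 (by linarith)))]
    have g1 : K * (θ - θ₀)⁻¹ = (A / 2) / (2 * M * (θ - θ₀)) := by
      rw [hK, ← div_eq_mul_inv, div_div]
    have g2 : (A / 2) / (2 * M * (θ - θ₀)) ≤ (A / 2) / Complex.abs (b.eval (E θ)) := by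
      gcongr
    have g3 : (A / 2) / Complex.abs (b.eval (E θ)) ≤
        Complex.abs (a.eval (E θ)) / Complex.abs (b.eval (E θ)) := by gcongr
    rw [g1]
    exact le_trans g2 g3
  have hmin : IntegrableOn (fun θ : ℝ => K * (θ - θ₀)⁻¹) (Set.Ioo θ₀ (θ₀ + ε)) volume := by
    apply Integrable.mono' hIoo.norm _ hbound
    exact (((measurable_id.sub_const θ₀).inv).const_mul K).aestronglyMeasurable
  have hmin2 : IntegrableOn (fun θ : ℝ => (θ - θ₀)⁻¹) (Set.Ioo θ₀ (θ₀ + ε)) volume := by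
    have h6 := hmin.const_mul K⁻¹
    have h7 : (fun x : ℝ => K⁻¹ * (K * (x - θ₀)⁻¹)) = fun x : ℝ => (x - θ₀)⁻¹ := by
      funext x
      field_simp
    rwa [h7] at h6
  have h7 : IntervalIntegrable (fun θ : ℝ => (θ - θ₀)⁻¹) volume θ₀ (θ₀ + ε) := by
    rw [intervalIntegrable_iff_integrableOn_Ioo_of_le (by linarith)]
    exact hmin2
  rw [intervalIntegrable_sub_inv_iff] at h7
  rcases h7 with h | h
  · linarith
  · exact h Set.left_mem_uIcc

lemma OVcauchy (a b : Polynomial ℂ) (hb : ∀ w : ℂ, Complex.abs w ≤ 1 → b.eval w ≠ 0) :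
    ∫ θ in Set.Icc 0 (2 * π), a.eval (E θ) / b.eval (E θ) =
      ((2 * π : ℝ) : ℂ) * (a.eval 0 / b.eval 0) := by
  set g : ℂ → ℂ := fun w => a.eval w / b.eval w with hg
  have hdiff : DiffContOnCl ℂ g (Metric.ball 0 1) := by
    apply DifferentiableOn.diffContOnCl
    rw [closure_ball (0 : ℂ) one_ne_zero]
    intro w hw
    have hw1 : Complex.abs w ≤ 1 := by
      simpa [Complex.dist_eq, Complex.abs_apply] using Metric.mem_closedBall.1 hw
    exact ((a.differentiableAt).div (b.differentiableAt) (hb w hw1)).differentiableWithinAt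
  have key := hdiff.circleIntegral_sub_inv_smul (w := 0) (Metric.mem_ball_self one_pos)
  have h1 : (∮ z in C(0, 1), (z - 0)⁻¹ • g z) =
      ∫ θ in (0 : ℝ)..(2 * π), Complex.I * g (E θ) := by
    rw [circleIntegral]
    apply intervalIntegral.integral_congr
    intro θ _
    have hcm : circleMap 0 1 θ = E θ := by
      simp [circleMap, E]
    simp only [deriv_circleMap, hcm, sub_zero, smul_eq_mul]
    have hne : E θ ≠ 0 := by
      intro h
      simpa [h] using abs_E θ
    field_simp
  rw [h1] at key
  rw [intervalIntegral.integral_const_mul] at key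
  have h2 : ∫ θ in (0 : ℝ)..(2 * π), g (E θ) = 2 * (π : ℂ) * g 0 := by
    have hI := Complex.I_ne_zero
    have : Complex.I * ∫ θ in (0 : ℝ)..(2 * π), g (E θ) =
        Complex.I * (2 * (π : ℂ) * g 0) := by
      rw [key, smul_eq_mul]; ring
    exact mul_left_cancel₀ hI this
  have h3 : ∫ θ in Set.Icc 0 (2 * π), a.eval (E θ) / b.eval (E θ) =
      ∫ θ in (0 : ℝ)..(2 * π), g (E θ) := by
    rw [intervalIntegral.integral_of_le (by positivity), MeasureTheory.integral_Icc_eq_integral_Ioc]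
  rw [h3, h2]
  push_cast
  ring

lemma OV : ∀ (N : ℕ) (a b : Polynomial ℂ), b.natDegree ≤ N →
    (∀ w : ℂ, Complex.abs w < 1 → b.eval w ≠ 0) →
    IntegrableOn (fun θ : ℝ => a.eval (E θ) / b.eval (E θ)) (Set.Icc 0 (2 * π)) volume →
    ∫ θ in Set.Icc 0 (2 * π), a.eval (E θ) / b.eval (E θ) =
      ((2 * π : ℝ) : ℂ) * (a.eval 0 / b.eval 0) := by
  intro N
  induction N with
  | zero =>
      intro a b hdeg hb _
      have hb0 : b.eval 0 ≠ 0 := hb 0 (by simp)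
      have hconst : b = Polynomial.C (b.coeff 0) :=
        Polynomial.eq_C_of_natDegree_eq_zero (Nat.le_zero.1 hdeg)
      apply OVcauchy
      intro w _
      rw [hconst]
      simp only [Polynomial.eval_C]
      intro h
      apply hb0
      rw [hconst]
      simpa using h
  | succ N ih =>
      intro a b hdeg hb hint
      by_cases hcb : ∀ w : ℂ, Complex.abs w ≤ 1 → b.eval w ≠ 0
      · exact OVcauchy a b hcb
      · push_neg at hcb
        obtain ⟨α, hα1, hαroot⟩ := hcb
        have hα : Complex.abs α = 1 := by
          rcases lt_or_eq_of_le hα1 with h | h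
          · exact absurd hαroot (hb α h)
          · exact h
        have hb0 : b.eval 0 ≠ 0 := hb 0 (by simp)
        have hbne : b ≠ 0 := fun h => hb0 (by simp [h])
        have haroot : a.eval α = 0 := by
          by_contra hane
          exact OV_not_integrable hα hane hαroot hbne hint
        obtain ⟨a₁, ha₁⟩ := Polynomial.dvd_iff_isRoot.2 haroot
        obtain ⟨b₁, hb₁⟩ := Polynomial.dvd_iff_isRoot.2 hαroot
        have hb₁ne : b₁ ≠ 0 := by
          intro h
          rw [h, mul_zero] at hb₁
          exact hbne hb₁
        have hb₁deg : b₁.natDegree ≤ N := by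
          have h1 : b.natDegree = 1 + b₁.natDegree := by
            rw [hb₁, Polynomial.natDegree_mul (Polynomial.X_sub_C_ne_zero α) hb₁ne,
              Polynomial.natDegree_X_sub_C]
          omega
        have hb₁nv : ∀ w : ℂ, Complex.abs w < 1 → b₁.eval w ≠ 0 := by
          intro w hw h
          apply hb w hw
          rw [hb₁, Polynomial.eval_mul, h, mul_zero]
        -- a.e. equality
        have hαne0 : α ≠ 0 := by
          intro h
          rw [h] at hα
          simpa using hα
        have haeq : ∀ᵐ θ ∂(volume.restrict (Set.Icc 0 (2 * π))),
            a.eval (E θ) / b.eval (E θ) = a₁.eval (E θ) / b₁.eval (E θ) := by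
          refine ae_restrict_of_ae ?_
          have hnull : volume {θ : ℝ | E θ = α} = 0 :=
            Set.Countable.measure_zero (countable_E_eq α) _
          rw [MeasureTheory.ae_iff]
          apply measure_mono_null _ hnull
          intro θ hθ
          simp only [Set.mem_setOf_eq, Set.mem_compl_iff] at *
          by_contra hne
          apply hθ
          rw [ha₁, hb₁, Polynomial.eval_mul, Polynomial.eval_mul]
          have hx : (Polynomial.X - Polynomial.C α).eval (E θ) ≠ 0 := by
            simpa [sub_ne_zero] using hne
          rw [mul_div_mul_left _ _ hx]
        have hint₁ : IntegrableOn (fun θ : ℝ => a₁.eval (E θ) / b₁.eval (E θ))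
            (Set.Icc 0 (2 * π)) volume := hint.congr haeq
        have hval := ih a₁ b₁ hb₁deg hb₁nv hint₁
        rw [MeasureTheory.integral_congr_ae haeq, hval]
        congr 1
        rw [ha₁, hb₁, Polynomial.eval_mul, Polynomial.eval_mul]
        have hx : (Polynomial.X - Polynomial.C α).eval 0 ≠ 0 := by
          simp only [Polynomial.eval_sub, Polynomial.eval_X, Polynomial.eval_C, zero_sub,
            neg_ne_zero]
          exact hαne0
        rw [mul_div_mul_left _ _ hx]

lemma boundary_nonvanishing (q : MvPolynomial (Fin 2) ℂ)
    (hq : ∀ z w : ℂ, Complex.abs z < 1 → Complex.abs w < 1 →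
      MvPolynomial.eval ![z, w] q ≠ 0)
    (z₀ : ℂ) (hz₀ : Complex.abs z₀ = 1)
    (hb : Polynomial.map (Polynomial.evalRingHom z₀) (toP q) ≠ 0)
    (w₀ : ℂ) (hw₀ : Complex.abs w₀ < 1) :
    Polynomial.eval w₀ (Polynomial.map (Polynomial.evalRingHom z₀) (toP q)) ≠ 0 := by
  intro h0
  set b₁ := Polynomial.map (Polynomial.evalRingHom z₀) (toP q) with hb₁
  have hRfin : {x : ℂ | b₁.IsRoot x}.Finite := Polynomial.finite_setOf_isRoot hb
  have hinf : (Set.Ioo (0 : ℝ) (1 - Complex.abs w₀)).Infinite :=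
    Set.Ioo_infinite (by linarith)
  obtain ⟨ρ, hρmem⟩ :=
    (hinf.diff ((hRfin.image (fun α => Complex.abs (α - w₀))))).nonempty
  have hρ0 : 0 < ρ := hρmem.1.1
  have hρ1 : ρ < 1 - Complex.abs w₀ := hρmem.1.2
  have hnr : ∀ w ∈ Metric.sphere w₀ ρ, ¬ b₁.IsRoot w := by
    intro w hw hroot
    apply hρmem.2
    refine ⟨w, hroot, ?_⟩
    show Complex.abs (w - w₀) = ρ
    rw [← Complex.dist_eq]
    exact Metric.mem_sphere.1 hw
  obtain ⟨w₁, hw₁s, hw₁min⟩ := (isCompact_sphere w₀ ρ).exists_isMinOn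
    (NormedSpace.sphere_nonempty.2 hρ0.le)
    ((Complex.continuous_abs.comp b₁.continuous_aeval).continuousOn)
  have hδ : 0 < Complex.abs (b₁.eval w₁) :=
    AbsoluteValue.pos _ (hnr w₁ hw₁s)
  set δ : ℝ := Complex.abs (b₁.eval w₁) with hδdef
  set G : ℂ × ℂ → ℂ := fun zw => MvPolynomial.eval ![zw.1, zw.2] q with hG
  have hGcont : Continuous G := cont2 q
  have hGz₀ : ∀ w : ℂ, G (z₀, w) = b₁.eval w := fun w => (eval_toP q z₀ w).symm
  have hEV1' : ∀ᶠ z in nhds z₀, ∀ w ∈ Metric.sphere w₀ ρ,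
      δ / 2 < Complex.abs (G (z, w)) := by
    apply (isCompact_sphere w₀ ρ).eventually_forall_of_forall_eventually
    intro w hw
    have hcont : ContinuousAt (fun zw : ℂ × ℂ => Complex.abs (G zw)) (z₀, w) :=
      (Complex.continuous_abs.comp hGcont).continuousAt
    have hlt : δ / 2 < Complex.abs (G (z₀, w)) := by
      rw [hGz₀ w]
      have := hw₁min hw
      simp only [Set.mem_setOf_eq] at this
      calc δ / 2 < δ := by linarith
        _ ≤ Complex.abs (b₁.eval w) := this
    exact hcont (Ioi_mem_nhds hlt)
  have htend : Filter.Tendsto (fun r : ℝ => ((r : ℂ) * z₀)) (nhdsWithin 1 (Set.Iio 1))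
      (nhds z₀) := by
    have hc : Continuous fun r : ℝ => ((r : ℂ) * z₀) :=
      Complex.continuous_ofReal.mul continuous_const
    have h := hc.tendsto 1
    rw [show ((1 : ℝ) : ℂ) * z₀ = z₀ by simp] at h
    exact h.mono_left nhdsWithin_le_nhds
  have hEV1 : ∀ᶠ r : ℝ in nhdsWithin 1 (Set.Iio 1), ∀ w ∈ Metric.sphere w₀ ρ,
      δ / 2 < Complex.abs (G ((r : ℂ) * z₀, w)) := htend.eventually hEV1'
  have hEV2 : ∀ᶠ r : ℝ in nhdsWithin 1 (Set.Iio 1),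
      Complex.abs (G ((r : ℂ) * z₀, w₀)) < δ / 2 := by
    have ht2 : Filter.Tendsto (fun r : ℝ => Complex.abs (G ((r : ℂ) * z₀, w₀)))
        (nhdsWithin 1 (Set.Iio 1)) (nhds (Complex.abs (G (z₀, w₀)))) :=
      ((Complex.continuous_abs.comp hGcont).continuousAt.tendsto.comp
        (htend.prodMk_nhds tendsto_const_nhds))
    have hzero : Complex.abs (G (z₀, w₀)) = 0 := by
      rw [hGz₀ w₀, h0, map_zero]
    rw [hzero] at ht2
    exact ht2 (Iio_mem_nhds (by positivity))
  have hEV3 : ∀ᶠ r : ℝ in nhdsWithin 1 (Set.Iio 1), r ∈ Set.Ioo (0 : ℝ) 1 :=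
    Ioo_mem_nhdsLT_of_mem ⟨by norm_num, le_rfl⟩
  obtain ⟨r, h1, h2, h3⟩ := (hEV1.and (hEV2.and hEV3)).exists
  have habs_zr : Complex.abs ((r : ℂ) * z₀) = r := by
    rw [map_mul, Complex.abs_ofReal, hz₀, mul_one, abs_of_pos h3.1]
  have hzr1 : Complex.abs ((r : ℂ) * z₀) < 1 := by rw [habs_zr]; exact h3.2
  have hnz : ∀ w ∈ Metric.closedBall w₀ ρ, G ((r : ℂ) * z₀, w) ≠ 0 := by
    intro w hw
    have hd : dist w w₀ ≤ ρ := Metric.mem_closedBall.1 hw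
    have hw1 : Complex.abs w < 1 := by
      calc Complex.abs w = Complex.abs (w - w₀ + w₀) := by ring_nf
        _ ≤ Complex.abs (w - w₀) + Complex.abs w₀ := Complex.abs.add_le _ _
        _ ≤ ρ + Complex.abs w₀ := by
            rw [← Complex.dist_eq]; linarith
        _ < 1 := by linarith
    exact hq _ w hzr1 hw1
  set F : ℂ → ℂ := fun w => (G ((r : ℂ) * z₀, w))⁻¹ with hF
  have hFd : DiffContOnCl ℂ F (Metric.ball w₀ ρ) := by
    apply DifferentiableOn.diffContOnCl
    rw [closure_ball w₀ (ne_of_gt hρ0)]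
    intro w hw
    have hfun : (fun w : ℂ => G ((r : ℂ) * z₀, w)) =
        fun w : ℂ => Polynomial.eval w
          (Polynomial.map (Polynomial.evalRingHom ((r : ℂ) * z₀)) (toP q)) :=
      funext fun w => by rw [hG]; exact (eval_toP q ((r : ℂ) * z₀) w).symm
    have hda : DifferentiableAt ℂ (fun w : ℂ => G ((r : ℂ) * z₀, w)) w := by
      rw [hfun]
      apply Polynomial.differentiableAt
    exact (hda.inv (hnz w hw)).differentiableWithinAt
  have hbound : ∀ z ∈ frontier (Metric.ball w₀ ρ), ‖F z‖ ≤ (δ / 2)⁻¹ := by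
    rw [frontier_ball w₀ (ne_of_gt hρ0)]
    intro w hw
    rw [hF]
    simp only [norm_inv, Complex.norm_eq_abs]
    have := h1 w hw
    have hp : (0:ℝ) < δ / 2 := by positivity
    rw [inv_le_inv₀ (by linarith) hp]
    linarith
  have hmax := Complex.norm_le_of_forall_mem_frontier_norm_le Metric.isBounded_ball hFd
    hbound (subset_closure (Metric.mem_ball_self hρ0))
  have hpos : 0 < Complex.abs (G ((r : ℂ) * z₀, w₀)) :=
    AbsoluteValue.pos _ (hnz w₀ (Metric.mem_closedBall_self hρ0.le))
  rw [hF] at hmax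
  simp only [norm_inv, Complex.norm_eq_abs] at hmax
  rw [inv_le_inv₀ hpos (by positivity)] at hmax
  linarith

lemma contQ (g : MvPolynomial (Fin 2) ℂ) :
    Continuous (fun p : ℝ × ℝ => MvPolynomial.eval ![E p.1, E p.2] g) := by
  induction g using MvPolynomial.induction_on with
  | C c => simpa using continuous_const
  | add p q hp hq => simp only [map_add]; exact hp.add hq
  | mul_X p i hp =>
      simp only [map_mul, MvPolynomial.eval_X]
      fin_cases i
      · exact hp.mul (continuous_E.comp continuous_fst)
      · exact hp.mul (continuous_E.comp continuous_snd)

lemma eval_q00 (g : MvPolynomial (Fin 2) ℂ) :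
    MvPolynomial.eval ![(0:ℂ), 0] g = MvPolynomial.eval (fun _ => (0:ℂ)) g := by
  have h : ![(0:ℂ), 0] = (fun _ => (0:ℂ)) := by
    funext i
    fin_cases i <;> rfl
  rw [h]

lemma div_le_half (x y : ℝ) (hx : 0 ≤ x) (hy : 0 ≤ y) : x / y ≤ (x ^ 2 / y ^ 2 + 1) / 2 := by
  rcases eq_or_lt_of_le hy with h | h
  · rw [← h]
    norm_num
  · have h2 : x ^ 2 / y ^ 2 = (x / y) ^ 2 := (div_pow x y 2).symm
    rw [h2]
    nlinarith [sq_nonneg (x / y - 1), div_nonneg hx hy]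

lemma part2 (q f : MvPolynomial (Fin 2) ℂ)
    (hq : ∀ z w : ℂ, Complex.abs z < 1 → Complex.abs w < 1 →
      MvPolynomial.eval ![z, w] q ≠ 0)
    (hfint : IntegrableOn (fun p : ℝ × ℝ =>
        Complex.abs (MvPolynomial.eval ![E p.1, E p.2] f) ^ 2 /
          Complex.abs (MvPolynomial.eval ![E p.1, E p.2] q) ^ 2)
      (Set.Icc 0 (2 * π) ×ˢ Set.Icc 0 (2 * π)) volume)
    (hf0 : MvPolynomial.eval (fun _ => (0 : ℂ)) f = 0) :
    ∫ p in (Set.Icc 0 (2 * π) ×ˢ Set.Icc 0 (2 * π)),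
      MvPolynomial.eval ![E p.1, E p.2] f / MvPolynomial.eval ![E p.1, E p.2] q ∂volume = 0 := by
  classical
  have hπ : (0 : ℝ) < π := Real.pi_pos
  have hq00 : MvPolynomial.eval ![(0:ℂ), 0] q ≠ 0 := hq 0 0 (by simp) (by simp)
  have hmeas : ((volume : Measure ℝ).restrict (Set.Icc 0 (2 * π))).prod
      ((volume : Measure ℝ).restrict (Set.Icc 0 (2 * π))) =
      (volume : Measure (ℝ × ℝ)).restrict (Set.Icc 0 (2 * π) ×ˢ Set.Icc 0 (2 * π)) := by
    rw [MeasureTheory.Measure.prod_restrict, ← MeasureTheory.Measure.volume_eq_prod]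
  haveI hfin : IsFiniteMeasure ((volume : Measure ℝ).restrict (Set.Icc 0 (2 * π))) :=
    ⟨by rw [Measure.restrict_apply_univ]; exact measure_Icc_lt_top⟩
  have hfint' : Integrable (fun p : ℝ × ℝ =>
      Complex.abs (MvPolynomial.eval ![E p.1, E p.2] f) ^ 2 /
        Complex.abs (MvPolynomial.eval ![E p.1, E p.2] q) ^ 2)
      (((volume : Measure ℝ).restrict (Set.Icc 0 (2 * π))).prod
        ((volume : Measure ℝ).restrict (Set.Icc 0 (2 * π)))) := by
    rw [hmeas]; exact hfint
  have hgm : AEStronglyMeasurable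
      (fun p : ℝ × ℝ => MvPolynomial.eval ![E p.1, E p.2] f /
        MvPolynomial.eval ![E p.1, E p.2] q)
      (((volume : Measure ℝ).restrict (Set.Icc 0 (2 * π))).prod
        ((volume : Measure ℝ).restrict (Set.Icc 0 (2 * π)))) :=
    ((contQ f).measurable.div (contQ q).measurable).aestronglyMeasurable
  have hgint : Integrable (fun p : ℝ × ℝ =>
      MvPolynomial.eval ![E p.1, E p.2] f / MvPolynomial.eval ![E p.1, E p.2] q)
      (((volume : Measure ℝ).restrict (Set.Icc 0 (2 * π))).prod
        ((volume : Measure ℝ).restrict (Set.Icc 0 (2 * π)))) := by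
    apply Integrable.mono' ((hfint'.add (integrable_const 1)).div_const 2) hgm
    refine Filter.Eventually.of_forall fun p => ?_
    have h1 : ‖MvPolynomial.eval ![E p.1, E p.2] f / MvPolynomial.eval ![E p.1, E p.2] q‖ =
        Complex.abs (MvPolynomial.eval ![E p.1, E p.2] f) /
          Complex.abs (MvPolynomial.eval ![E p.1, E p.2] q) := by
      rw [Complex.norm_eq_abs, map_div₀]
    have h2 := div_le_half (Complex.abs (MvPolynomial.eval ![E p.1, E p.2] f))
      (Complex.abs (MvPolynomial.eval ![E p.1, E p.2] q))
      (AbsoluteValue.nonneg _ _) (AbsoluteValue.nonneg _ _)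
    simpa [h1, Complex.abs_apply] using h2
  -- the bad set is finite
  have hPqne : toP q ≠ 0 := by
    intro h
    apply hq00
    have h2 := eval_toP q 0 0
    rw [h] at h2
    simpa using h2.symm
  obtain ⟨k, hk⟩ : ∃ k, (toP q).coeff k ≠ 0 := by
    by_contra h
    push_neg at h
    exact hPqne (Polynomial.ext fun n => by simp [h n])
  have hbadfin : {z : ℂ | Polynomial.map (Polynomial.evalRingHom z) (toP q) = 0}.Finite := by
    apply Set.Finite.subset (Polynomial.finite_setOf_isRoot hk)
    intro z hz
    show ((toP q).coeff k).IsRoot z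
    have hz' : Polynomial.map (Polynomial.evalRingHom z) (toP q) = 0 := hz
    have h3 : (Polynomial.map (Polynomial.evalRingHom z) (toP q)).coeff k = 0 := by
      rw [hz']; simp
    rw [Polynomial.coeff_map] at h3
    exact h3
  have hbadnull : ∀ᵐ s ∂((volume : Measure ℝ).restrict (Set.Icc 0 (2 * π))),
      Polynomial.map (Polynomial.evalRingHom (E s)) (toP q) ≠ 0 := by
    apply ae_restrict_of_ae
    rw [MeasureTheory.ae_iff]
    apply measure_mono_null _ (null_E_mem hbadfin)
    intro s hs
    simpa using hs
  -- the inner integral, a.e. in s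
  have hinner : ∀ᵐ s ∂((volume : Measure ℝ).restrict (Set.Icc 0 (2 * π))),
      (∫ t, (fun p : ℝ × ℝ => MvPolynomial.eval ![E p.1, E p.2] f /
          MvPolynomial.eval ![E p.1, E p.2] q) (s, t)
        ∂((volume : Measure ℝ).restrict (Set.Icc 0 (2 * π)))) =
      ((2 * π : ℝ) : ℂ) * (Polynomial.eval (E s) ((toP f).coeff 0) /
        Polynomial.eval (E s) ((toP q).coeff 0)) := by
    filter_upwards [hgint.prod_right_ae, hbadnull] with s hs1 hs2
    have hfun : (fun t : ℝ => (fun p : ℝ × ℝ => MvPolynomial.eval ![E p.1, E p.2] f /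
          MvPolynomial.eval ![E p.1, E p.2] q) (s, t)) =
        fun t : ℝ => (Polynomial.map (Polynomial.evalRingHom (E s)) (toP f)).eval (E t) /
          (Polynomial.map (Polynomial.evalRingHom (E s)) (toP q)).eval (E t) := by
      funext t
      show MvPolynomial.eval ![E s, E t] f / MvPolynomial.eval ![E s, E t] q = _
      rw [← eval_toP f (E s) (E t), ← eval_toP q (E s) (E t)]
    have hI : Integrable (fun t : ℝ =>
        (Polynomial.map (Polynomial.evalRingHom (E s)) (toP f)).eval (E t) /
          (Polynomial.map (Polynomial.evalRingHom (E s)) (toP q)).eval (E t))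
        ((volume : Measure ℝ).restrict (Set.Icc 0 (2 * π))) := by
      rw [← hfun]; exact hs1
    have hOV := OV (Polynomial.map (Polynomial.evalRingHom (E s)) (toP q)).natDegree
      (Polynomial.map (Polynomial.evalRingHom (E s)) (toP f))
      (Polynomial.map (Polynomial.evalRingHom (E s)) (toP q)) le_rfl
      (fun w hw => boundary_nonvanishing q hq (E s) (abs_E s) hs2 w hw) hI
    rw [hfun]
    rw [hOV]
    congr 2
    · rw [← Polynomial.coeff_zero_eq_eval_zero
          (Polynomial.map (Polynomial.evalRingHom (E s)) (toP f)),
        Polynomial.coeff_map, Polynomial.coe_evalRingHom]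
    · rw [← Polynomial.coeff_zero_eq_eval_zero
          (Polynomial.map (Polynomial.evalRingHom (E s)) (toP q)),
        Polynomial.coeff_map, Polynomial.coe_evalRingHom]
  -- outer integrand is integrable
  have hIout : Integrable (fun s : ℝ => Polynomial.eval (E s) ((toP f).coeff 0) /
      Polynomial.eval (E s) ((toP q).coeff 0))
      ((volume : Measure ℝ).restrict (Set.Icc 0 (2 * π))) := by
    have hIv := hgint.integral_prod_left
    have h2 := hIv.congr hinner
    have hc : ((2 * π : ℝ) : ℂ) ≠ 0 := by
      rw [Complex.ofReal_ne_zero]; positivity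
    have h3 := h2.const_mul (((2 * π : ℝ) : ℂ))⁻¹
    have h4 : (fun s : ℝ => (((2 * π : ℝ) : ℂ))⁻¹ * (((2 * π : ℝ) : ℂ) *
        (Polynomial.eval (E s) ((toP f).coeff 0) / Polynomial.eval (E s) ((toP q).coeff 0)))) =
        fun s : ℝ => Polynomial.eval (E s) ((toP f).coeff 0) /
          Polynomial.eval (E s) ((toP q).coeff 0) := by
      funext s
      rw [← mul_assoc, inv_mul_cancel₀ hc, one_mul]
    rwa [h4] at h3
  -- nonvanishing of q₀ on the open disk
  have hq₀nv : ∀ w : ℂ, Complex.abs w < 1 → Polynomial.eval w ((toP q).coeff 0) ≠ 0 := by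
    intro w hw h
    apply hq w 0 hw (by simp)
    rw [← eval_toP q w 0, ← Polynomial.coeff_zero_eq_eval_zero
        (Polynomial.map (Polynomial.evalRingHom w) (toP q)),
      Polynomial.coeff_map, Polynomial.coe_evalRingHom]
    exact h
  -- value of the constant coefficient of f at 0
  have hf00 : Polynomial.eval 0 ((toP f).coeff 0) = 0 := by
    have h2 : Polynomial.eval 0 ((toP f).coeff 0) =
        Polynomial.eval 0 (Polynomial.map (Polynomial.evalRingHom (0:ℂ)) (toP f)) := by
      rw [← Polynomial.coeff_zero_eq_eval_zero ((toP f).coeff 0),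
        ← Polynomial.coeff_zero_eq_eval_zero
          (Polynomial.map (Polynomial.evalRingHom (0:ℂ)) (toP f)),
        Polynomial.coeff_map, Polynomial.coe_evalRingHom]
      exact Polynomial.coeff_zero_eq_eval_zero _
    rw [h2, eval_toP f 0 0, eval_q00 f, hf0]
  -- put everything together
  rw [← hmeas, MeasureTheory.integral_prod _ hgint, MeasureTheory.integral_congr_ae hinner,
    MeasureTheory.integral_const_mul,
    OV ((toP q).coeff 0).natDegree ((toP f).coeff 0) ((toP q).coeff 0) le_rfl hq₀nv hIout,
    hf00]
  simp

end BSaux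

theorem bernstein_szego_orthogonality
    (n m : ℕ) (q : MvPolynomial (Fin 2) ℂ)
    (hdeg : q.degreeOf 0 ≤ n ∧ q.degreeOf 1 ≤ m)
    (hq : ∀ z w : ℂ, ‖z‖ < 1 → ‖w‖ < 1 →
      MvPolynomial.eval (![z, w]) q ≠ 0)
    -- the torus parametrized by angles, with normalized Lebesgue measure
    (T : ℝ × ℝ → Fin 2 → ℂ)
    (hT : ∀ p : ℝ × ℝ, T p = ![Complex.exp (p.1 * Complex.I), Complex.exp (p.2 * Complex.I)]) :
    -- q belongs to L²(μ) where dμ = |q|⁻² dσ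
    IntegrableOn
      (fun p : ℝ × ℝ => ‖MvPolynomial.eval (T p) q‖ ^ 2 /
        ‖MvPolynomial.eval (T p) q‖ ^ 2)
      (Set.Icc 0 (2 * π) ×ˢ Set.Icc 0 (2 * π)) volume ∧
    -- orthogonality: for f ∈ ℂ[z,w] ∩ L²(μ) with Fourier support in
    -- {(j,k) : k ≥ 1} ∪ {(j,0) : j ≥ 1} (in particular f(0,0) = 0), ∫ f/q dσ = 0
    ∀ f : MvPolynomial (Fin 2) ℂ,
      IntegrableOn
        (fun p : ℝ × ℝ => ‖MvPolynomial.eval (T p) f‖ ^ 2 /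
          ‖MvPolynomial.eval (T p) q‖ ^ 2)
        (Set.Icc 0 (2 * π) ×ˢ Set.Icc 0 (2 * π)) volume →
      MvPolynomial.eval (fun _ => (0 : ℂ)) f = 0 →
      (∀ d ∈ f.support, 1 ≤ d 1 ∨ (d 1 = 0 ∧ 1 ≤ d 0)) →
      ∫ p in (Set.Icc 0 (2 * π) ×ˢ Set.Icc 0 (2 * π)),
          MvPolynomial.eval (T p) f / MvPolynomial.eval (T p) q ∂volume = 0 := by
  constructor
  · simp only [hT]
    apply MeasureTheory.Measure.integrableOn_of_bounded (M := 1)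
    · exact ((isCompact_Icc.prod isCompact_Icc).measure_lt_top).ne
    · have hc : Continuous (fun p : ℝ × ℝ =>
          BSaux.Complex.abs (MvPolynomial.eval ![BSaux.E p.1, BSaux.E p.2] q) ^ 2) :=
        (BSaux.Complex.continuous_abs.comp (BSaux.contQ q)).pow 2
      exact (hc.measurable.div hc.measurable).aestronglyMeasurable
    · have key : ∀ x : ℝ, 0 ≤ x → ‖x / x‖ ≤ 1 := by
        intro x hx
        rcases eq_or_lt_of_le hx with h | h
        · simp [← h]
        · rw [div_self h.ne']
          simp
      exact Filter.Eventually.of_forall fun p => key _ (by positivity)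
  · intro f hfi hf0 _
    simp only [hT] at hfi ⊢
    exact BSaux.part2 q f hq hfi hf0
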